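/- Let V be a vector space of even dimension 2n over a field k with a hyperbolic quadratic form q. If L and W are Lagrangian subspaces (i.e., n-dimensional subspaces on which q vanishes identically) belonging to the same family of Lagrangians, then dim(L ∩ W) ≡ n (mod 2). -/

import Mathlib

open Module

universe u v

/-- An isotropic subspace for a refl nondegenerate bilinear form has dim ≤ half. -/
theorem isotropic_le {k : Type u} {M : Type v} [Field k] [AddCommGroup M] [Module k M]
    [FiniteDimensional k M] (B : LinearMap.BilinForm k M) (hr : B.IsRefl)
    (hnd : B.Nondegenerate) (N : Submodule k M) (hN : ∀ x ∈ N, ∀ y ∈ N, B x y = 0) :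
    2 * finrank k N ≤ finrank k M := by
  have h1 : N ≤ B.orthogonal N := fun x hx => fun y hy => hN y hy x hx
  have h2 := LinearMap.BilinForm.finrank_orthogonal hnd N
  have h3 := Submodule.finrank_mono h1
  have h4 : finrank k N ≤ finrank k M := Submodule.finrank_le N
  omega

/-- A nondegenerate alternating bilinear form exists only on even-dimensional spaces. -/
theorem alt_nondeg_even : ∀ (N : ℕ), ∀ {k : Type u} {M : Type v} [Field k] [AddCommGroup M]
    [Module k M] [FiniteDimensional k M], ∀ (B : LinearMap.BilinForm k M),
    B.IsAlt → B.Nondegenerate → finrank k M = N → 2 ∣ N := by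
  intro N
  induction N using Nat.strong_induction_on with
  | _ N ih =>
    intro k M _ _ _ _ B halt hnd hdim
    rcases Nat.eq_zero_or_pos N with h0 | hpos
    · omega
    · -- pick v ≠ 0
      have : Nontrivial M := by
        rw [← finrank_pos_iff (R := k)]; omega
      obtain ⟨v, hv0⟩ := exists_ne (0 : M)
      have hex : ∃ y, B v y ≠ 0 := by
        by_contra h
        push_neg at h
        exact hv0 (hnd.1 v h)
      obtain ⟨y, hy⟩ := hex
      set w : M := (B v y)⁻¹ • y with hw
      have hvw : B v w = 1 := by
        simp [hw, inv_mul_cancel₀ hy]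
      have hwv : B w v = -1 := by
        have h := halt (v + w)
        simp only [map_add, LinearMap.add_apply, halt v, halt w, hvw] at h
        linear_combination h
      set K : Submodule k M := LinearMap.ker (B v) ⊓ LinearMap.ker (B w) with hK
      -- projection onto K
      set p : M →ₗ[k] M := LinearMap.id + (LinearMap.smulRight (B w) v)
          - (LinearMap.smulRight (B v) w) with hp
      have hpx : ∀ x, p x = x + (B w x) • v - (B v x) • w := fun x => rfl
      have hmemK : ∀ x, x ∈ K ↔ B v x = 0 ∧ B w x = 0 := by
        intro x; simp [hK, LinearMap.mem_ker]
      have hpK : ∀ x, p x ∈ K := by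
        intro x
        rw [hmemK]
        constructor
        · simp only [hpx, map_sub, map_add, map_smul, hvw, halt v, halt w, smul_eq_mul]
          ring
        · simp only [hpx, map_sub, map_add, map_smul, hwv, hvw, halt v, halt w, smul_eq_mul]
          ring
      -- finrank K = N - 2
      have hsurj : Function.Surjective ((B v).prod (B w)) := by
        rintro ⟨a, b⟩
        refine ⟨-b • v + a • w, ?_⟩
        simp [LinearMap.prod_apply, map_add, map_smul, hvw, hwv, halt v, halt w]
      have hker : LinearMap.ker ((B v).prod (B w)) = K := by
        rw [LinearMap.ker_prod, hK]
      have hrank := LinearMap.finrank_range_add_finrank_ker ((B v).prod (B w))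
      rw [hker, LinearMap.range_eq_top.mpr hsurj, finrank_top, hdim] at hrank
      have hkk : finrank k (k × k) = 2 := by simp
      rw [hkk] at hrank
      -- restrict B to K
      have hKnd : (B.restrict K).Nondegenerate := by
        refine (LinearMap.IsRefl.nondegenerate_iff_separatingLeft (B := B.restrict K)
          (fun x y h => LinearMap.IsAlt.isRefl halt _ _ h)).mpr ?_
        intro u hu
        have h0 : ∀ z : M, B (↑u) z = 0 := by
          intro z
          have hz : z = p z - (B w z) • v + (B v z) • w := by
            rw [hpx]; abel
          have h1 : B (↑u) (p z) = 0 := hu ⟨p z, hpK z⟩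
          have h2 : B (↑u) v = 0 := LinearMap.IsAlt.isRefl halt _ _ ((hmemK _).mp u.2).1
          have h3 : B (↑u) w = 0 := LinearMap.IsAlt.isRefl halt _ _ ((hmemK _).mp u.2).2
          rw [hz]
          simp [map_add, map_sub, map_smul, h1, h2, h3]
        exact Subtype.ext (hnd.1 _ h0)
      have hKalt : (B.restrict K).IsAlt := fun u => halt u
      have := ih (finrank k K) (by omega) (B.restrict K) hKalt hKnd rfl
      omega

theorem polar_zero_of_iso {k : Type u} {V : Type v} [Field k] [AddCommGroup V] [Module k V]
    (q : QuadraticForm k V) (S : Submodule k V) (hS : ∀ x ∈ S, q x = 0) :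
    ∀ x ∈ S, ∀ y ∈ S, QuadraticMap.polarBilin q x y = 0 := by
  intro x hx y hy
  rw [QuadraticMap.polarBilin_apply_apply, QuadraticMap.polar, hS _ hx, hS _ hy,
    hS _ (S.add_mem hx hy)]
  ring

theorem transverse_even {k : Type u} {V : Type v} [Field k] [AddCommGroup V] [Module k V]
    [FiniteDimensional k V] (n : ℕ) (q : QuadraticForm k V)
    (hnd : LinearMap.BilinForm.Nondegenerate (QuadraticMap.polarBilin q))
    (hdim : finrank k V = 2 * n)
    (L W U : Submodule k V)
    (hLr : finrank k L = n) (hLq : ∀ x ∈ L, q x = 0)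
    (hWr : finrank k W = n) (hWq : ∀ x ∈ W, q x = 0)
    (hUr : finrank k U = n) (hUq : ∀ x ∈ U, q x = 0)
    (hLW : L ⊓ W = ⊥) (hWU : W ⊓ U = ⊥) (hUL : U ⊓ L = ⊥) : 2 ∣ n := by
  set B := QuadraticMap.polarBilin q with hB
  have hcompl : IsCompl L W := by
    refine ⟨disjoint_iff.mpr hLW, codisjoint_iff.mpr ?_⟩
    apply Submodule.eq_top_of_finrank_eq
    have h := Submodule.finrank_sup_add_finrank_inf_eq L W
    rw [hLW, finrank_bot, add_zero, hLr, hWr] at h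
    omega
  set pL := L.projectionOnto W hcompl with hpL
  set pW := W.projectionOnto L hcompl.symm with hpW
  have hsum : ∀ x : V, (pL x : V) + (pW x : V) = x :=
    fun x => Submodule.projection_add_projection_eq_self hcompl x
  set β : LinearMap.BilinForm k ↥U :=
    B.compl₁₂ (L.subtype ∘ₗ pL ∘ₗ U.subtype) (W.subtype ∘ₗ pW ∘ₗ U.subtype) with hβ
  have hβapp : ∀ u u' : ↥U, β u u' = B (pL ↑u : V) (pW ↑u' : V) := fun u u' => rfl
  have halt : β.IsAlt := by
    intro u
    rw [hβapp, hB, QuadraticMap.polarBilin_apply_apply, QuadraticMap.polar,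
      hsum (↑u : V), hUq _ u.2, hLq _ (pL ↑u).2, hWq _ (pW ↑u).2]
    ring
  have hWsurj : Function.Surjective (pW ∘ₗ U.subtype) := by
    rw [← LinearMap.injective_iff_surjective_of_finrank_eq_finrank (by rw [hUr, hWr])]
    rw [← LinearMap.ker_eq_bot, eq_bot_iff]
    intro u hu
    simp only [LinearMap.mem_ker, LinearMap.comp_apply] at hu
    have : (↑u : V) ∈ L := (Submodule.projectionOnto_apply_eq_zero_iff hcompl.symm).mp hu
    have : (↑u : V) ∈ U ⊓ L := ⟨u.2, this⟩
    rw [hUL, Submodule.mem_bot] at this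
    rw [Submodule.mem_bot]
    exact Subtype.ext this
  have hndβ : LinearMap.BilinForm.Nondegenerate β := by
    refine (LinearMap.IsRefl.nondegenerate_iff_separatingLeft (B := β) halt.isRefl).mpr ?_
    intro u hu
    have hz : ∀ z : V, B (↑(pL ↑u) : V) z = 0 := by
      intro z
      rw [← hsum z, map_add]
      have h1 : B (↑(pL ↑u) : V) (pL z : V) = 0 :=
        polar_zero_of_iso q L hLq _ (pL ↑u).2 _ (pL z).2
      obtain ⟨u', hu'⟩ := hWsurj (pW z)
      have h2 : B (↑(pL ↑u) : V) (pW z : V) = 0 := by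
        rw [← hu']
        exact hu u'
      rw [h1, h2, add_zero]
    have h0 : (↑(pL ↑u) : V) = 0 := hnd.1 _ hz
    have : (↑u : V) ∈ W := by
      rw [← Submodule.projectionOnto_apply_eq_zero_iff hcompl]
      exact Subtype.ext h0
    have : (↑u : V) ∈ W ⊓ U := ⟨this, u.2⟩
    rw [hWU, Submodule.mem_bot] at this
    exact Subtype.ext this
  exact alt_nondeg_even n β halt hndβ hUr

/-- The statement of the main induction. -/
def MainStmt (n : ℕ) : Prop :=
  ∀ {k : Type u} {V : Type v} [Field k] [AddCommGroup V] [Module k V]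
    [FiniteDimensional k V] (q : QuadraticForm k V),
    LinearMap.BilinForm.Nondegenerate (QuadraticMap.polarBilin q) →
    finrank k V = 2 * n →
    ∀ L W U : Submodule k V,
    finrank k L = n → (∀ x ∈ L, q x = 0) →
    finrank k W = n → (∀ x ∈ W, q x = 0) →
    finrank k U = n → (∀ x ∈ U, q x = 0) →
    (finrank k ↥(L ⊓ W) + finrank k ↥(W ⊓ U) + finrank k ↥(U ⊓ L)) % 2 = n % 2

theorem reduce {k : Type u} {V : Type v} [Field k] [AddCommGroup V] [Module k V]
    [FiniteDimensional k V] (n : ℕ) (IH : MainStmt.{u, v} n) (q : QuadraticForm k V)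
    (hnd : LinearMap.BilinForm.Nondegenerate (QuadraticMap.polarBilin q))
    (hdim : finrank k V = 2 * (n + 1))
    (L W U : Submodule k V)
    (hLr : finrank k L = n + 1) (hLq : ∀ x ∈ L, q x = 0)
    (hWr : finrank k W = n + 1) (hWq : ∀ x ∈ W, q x = 0)
    (hUr : finrank k U = n + 1) (hUq : ∀ x ∈ U, q x = 0)
    (v : V) (hv0 : v ≠ 0) (hvL : v ∈ L) (hvW : v ∈ W) :
    (finrank k ↥(L ⊓ W) + finrank k ↥(W ⊓ U) + finrank k ↥(U ⊓ L)) % 2 = (n + 1) % 2 := by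
  set B := QuadraticMap.polarBilin q with hB
  have hBapp : ∀ x y, B x y = q (x + y) - q x - q y := fun x y => rfl
  have hBsymm : ∀ x y, B x y = B y x := by
    intro x y; rw [hBapp, hBapp, add_comm x y]; ring
  have hq_add : ∀ a b : V, q (a + b) = q a + q b + B a b := by
    intro a b; rw [hBapp]; ring
  have hBself : ∀ x, q x = 0 → B x x = 0 := by
    intro x hx
    have h2 : x + x = (2 : k) • x := (two_smul k x).symm
    rw [hBapp, h2, QuadraticMap.map_smul, hx]
    simp
  have qv : q v = 0 := hLq v hvL
  have hBvv : B v v = 0 := hBself v qv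
  -- construct the hyperbolic partner w
  obtain ⟨y, hy⟩ : ∃ y, B v y ≠ 0 := by
    by_contra h
    push_neg at h
    exact hv0 (hnd.1 v h)
  set w₁ : V := (B v y)⁻¹ • y with hw₁
  have hvw₁ : B v w₁ = 1 := by simp [hw₁, inv_mul_cancel₀ hy]
  clear_value w₁
  set w : V := w₁ - q w₁ • v with hw
  have hvw : B v w = 1 := by
    rw [hw, map_sub, LinearMap.map_smul, smul_eq_mul, hBvv, hvw₁]; ring
  have qw : q w = 0 := by
    have h1 : w = w₁ + (-(q w₁)) • v := by rw [hw]; module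
    rw [h1, hq_add, QuadraticMap.map_smul, LinearMap.map_smul, qv, hBsymm w₁ v, hvw₁]
    simp only [smul_eq_mul, smul_zero, mul_zero, mul_one]
    ring
  have hBww : B w w = 0 := hBself w qw
  have hBwv : B w v = 1 := by rw [hBsymm]; exact hvw
  -- the orthogonal complement of the hyperbolic plane
  set K : Submodule k V := LinearMap.ker (B v) ⊓ LinearMap.ker (B w) with hK
  have hmemK : ∀ x, x ∈ K ↔ B v x = 0 ∧ B w x = 0 := by
    intro x; simp [hK, LinearMap.mem_ker]
  set p : V →ₗ[k] V :=
    LinearMap.id - LinearMap.smulRight (B w) v - LinearMap.smulRight (B v) w with hp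
  have hpx : ∀ x, p x = x - B w x • v - B v x • w := fun _ => rfl
  have hpK : ∀ x, p x ∈ K := by
    intro x
    rw [hmemK]
    constructor
    · simp only [hpx, map_sub, map_smul, smul_eq_mul, hBvv, hvw]; ring
    · simp only [hpx, map_sub, map_smul, smul_eq_mul, hBwv, hBww]; ring
  have hpv : p v = 0 := by
    rw [hpx, hBwv, hBvv]; module
  have hKdim : finrank k ↥K = 2 * n := by
    have hsurj : Function.Surjective ((B v).prod (B w)) := by
      rintro ⟨a, b⟩
      refine ⟨b • v + a • w, ?_⟩
      simp [LinearMap.prod_apply, map_add, map_smul, hvw, hBwv, hBvv, hBww]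
    have hker : LinearMap.ker ((B v).prod (B w)) = K := by
      rw [LinearMap.ker_prod, hK]
    have hrank := LinearMap.finrank_range_add_finrank_ker ((B v).prod (B w))
    rw [hker, LinearMap.range_eq_top.mpr hsurj, finrank_top, hdim] at hrank
    have hkk : finrank k (k × k) = 2 := by simp
    omega
  have hq_p : ∀ x, B v x = 0 → q (p x) = q x := by
    intro x hx
    have h1 : p x = x + (-(B w x)) • v := by rw [hpx, hx]; module
    rw [h1, hq_add, QuadraticMap.map_smul, map_smul, qv, smul_eq_mul, smul_eq_mul,
      hBsymm x v, hx]
    ring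
  -- the restricted quadratic form
  set q₀ : QuadraticForm k ↥K := q.comp K.subtype with hq₀
  have hB₀app : ∀ x y : ↥K, QuadraticMap.polarBilin q₀ x y = B ↑x ↑y := fun x y => rfl
  have hnd₀ : LinearMap.BilinForm.Nondegenerate (QuadraticMap.polarBilin q₀) := by
    refine (LinearMap.IsRefl.nondegenerate_iff_separatingLeft (B := QuadraticMap.polarBilin q₀)
      (fun x y h => by rw [hB₀app] at h ⊢; rw [hBsymm]; exact h)).mpr ?_
    intro u hu
    have hall : ∀ z : V, B ↑u z = 0 := by
      intro z
      have hz : z = p z + B w z • v + B v z • w := by rw [hpx]; abel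
      have h1 : B ↑u (p z) = 0 := by
        have := hu ⟨p z, hpK z⟩
        rwa [hB₀app] at this
      have h2 : B ↑u v = 0 := by rw [hBsymm]; exact ((hmemK _).mp u.2).1
      have h3 : B ↑u w = 0 := by rw [hBsymm]; exact ((hmemK _).mp u.2).2
      rw [hz, map_add, map_add, map_smul, map_smul, h1, h2, h3]
      simp
    exact Subtype.ext (hnd.1 _ hall)
  have hrefl₀ : (QuadraticMap.polarBilin q₀).IsRefl := by
    intro x y h
    rw [hB₀app] at h ⊢
    rw [hBsymm]
    exact h
  -- the three reduced subspaces
  have hmap_le_K : ∀ X : Submodule k V, Submodule.map p X ≤ K := by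
    rintro X x ⟨x', -, rfl⟩
    exact hpK x'
  have hcomap : ∀ A : Submodule k V, A ≤ K →
      finrank k ↥(Submodule.comap K.subtype A) = finrank k ↥A := fun A hA =>
    (Submodule.comapSubtypeEquivOfLe hA).finrank_eq
  have hSsub : ∀ S : Submodule k V, (∀ x ∈ S, q x = 0) → v ∈ S →
      S ≤ LinearMap.ker (B v) := by
    intro S hSq hvS x hx
    exact LinearMap.mem_ker.mpr (polar_zero_of_iso q S hSq v hvS x hx)
  have hLker : L ≤ LinearMap.ker (B v) := hSsub L hLq hvL
  have hWker : W ≤ LinearMap.ker (B v) := hSsub W hWq hvW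
  -- rank facts for images under p
  have hrank_drop : ∀ S : Submodule k V, v ∈ S → S ≤ LinearMap.ker (B v) →
      finrank k ↥(Submodule.map p S) + 1 = finrank k ↥S := by
    intro S hvS hSv
    set f := p ∘ₗ S.subtype with hf
    have hrange : LinearMap.range f = Submodule.map p S := by
      rw [hf, LinearMap.range_comp, Submodule.range_subtype]
    have hspan : Submodule.span k {v} ≤ S := by
      rw [Submodule.span_le, Set.singleton_subset_iff]; exact hvS
    have hkerf : LinearMap.ker f = Submodule.comap S.subtype (Submodule.span k {v}) := by
      ext x
      simp only [LinearMap.mem_ker, hf, LinearMap.comp_apply, Submodule.mem_comap,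
        Submodule.coe_subtype, Submodule.mem_span_singleton]
      constructor
      · intro h
        have hx0 : B v ↑x = 0 := hSv x.2
        rw [hpx, hx0] at h
        refine ⟨B w ↑x, ?_⟩
        have : (↑x : V) - B w ↑x • v = 0 := by
          have := h
          rw [zero_smul, sub_zero] at this
          exact this
        have := sub_eq_zero.mp this
        rw [← this]
      · rintro ⟨a, ha⟩
        rw [← ha, map_smul, hpv, smul_zero]
    have h1 := LinearMap.finrank_range_add_finrank_ker f
    rw [hrange, hkerf] at h1
    have h2 : finrank k ↥(Submodule.comap S.subtype (Submodule.span k {v})) = 1 := by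
      rw [(Submodule.comapSubtypeEquivOfLe hspan).finrank_eq]
      exact finrank_span_singleton hv0
    omega
  have hrank_eq : ∀ S : Submodule k V, v ∉ S → S ≤ LinearMap.ker (B v) →
      finrank k ↥(Submodule.map p S) = finrank k ↥S := by
    intro S hvS hSv
    set f := p ∘ₗ S.subtype with hf
    have hrange : LinearMap.range f = Submodule.map p S := by
      rw [hf, LinearMap.range_comp, Submodule.range_subtype]
    have hinj : Function.Injective f := by
      rw [← LinearMap.ker_eq_bot, eq_bot_iff]
      intro x hx
      simp only [LinearMap.mem_ker, hf, LinearMap.comp_apply, Submodule.coe_subtype] at hx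
      have hx0 : B v ↑x = 0 := hSv x.2
      rw [hpx, hx0, zero_smul, sub_zero] at hx
      have hxv : (↑x : V) = B w ↑x • v := sub_eq_zero.mp hx
      set c := B w ↑x with hcdef
      have hc : c = 0 := by
        by_contra hc
        apply hvS
        have h2 : c⁻¹ • (↑x : V) = v := by
          rw [hxv, smul_smul, inv_mul_cancel₀ hc, one_smul]
        rw [← h2]
        exact S.smul_mem _ x.2
      rw [Submodule.mem_bot]
      apply Subtype.ext
      rw [show ((0 : ↥S) : V) = 0 from rfl, hxv, hc, zero_smul]
    rw [← hrange, LinearMap.finrank_range_of_inj hinj]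
  have hmap_inf : ∀ S T : Submodule k V, v ∈ S → S ≤ LinearMap.ker (B v) →
      T ≤ LinearMap.ker (B v) →
      Submodule.map p S ⊓ Submodule.map p T = Submodule.map p (S ⊓ T) := by
    intro S T hvS hS hT
    apply le_antisymm
    · rintro x ⟨⟨s, hsS, rfl⟩, ⟨t, htT, hpt⟩⟩
      have hps : p s = s - B w s • v := by
        rw [hpx, (hS hsS : B v s = 0), zero_smul, sub_zero]
      have hpt' : p t = t - B w t • v := by
        rw [hpx, (hT htT : B v t = 0), zero_smul, sub_zero]
      have hxS : p s ∈ S := by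
        rw [hps]
        exact S.sub_mem hsS (S.smul_mem _ hvS)
      have htS : t ∈ S := by
        have heq : t = p s + B w t • v := by rw [← hpt, hpt']; abel
        rw [heq]
        exact S.add_mem hxS (S.smul_mem _ hvS)
      exact ⟨t, ⟨htS, htT⟩, hpt⟩
    · exact le_inf (Submodule.map_mono inf_le_left) (Submodule.map_mono inf_le_right)
  -- the two cases
  have hLWker : L ⊓ W ≤ LinearMap.ker (B v) := le_trans inf_le_left hLker
  have hiso' : ∀ (X : Submodule k V), X ≤ LinearMap.ker (B v) → (∀ x ∈ X, q x = 0) →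
      ∀ z ∈ Submodule.comap K.subtype (Submodule.map p X), q₀ z = 0 := by
    intro X hXk hXq z hz
    rw [Submodule.mem_comap] at hz
    obtain ⟨s, hs, hps⟩ := hz
    have : q₀ z = q (K.subtype z) := QuadraticMap.comp_apply q K.subtype z
    rw [this, ← hps, hq_p s (hXk hs)]
    exact hXq s hs
  by_cases hvU : v ∈ U
  · -- v lies in all three subspaces
    have hUker : U ≤ LinearMap.ker (B v) := hSsub U hUq hvU
    set L' := Submodule.comap K.subtype (Submodule.map p L) with hL'
    set W' := Submodule.comap K.subtype (Submodule.map p W) with hW'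
    set U' := Submodule.comap K.subtype (Submodule.map p U) with hU'
    have hL'r : finrank k ↥L' = n := by
      rw [hL', hcomap _ (hmap_le_K _)]
      have := hrank_drop L hvL hLker
      omega
    have hW'r : finrank k ↥W' = n := by
      rw [hW', hcomap _ (hmap_le_K _)]
      have := hrank_drop W hvW hWker
      omega
    have hU'r : finrank k ↥U' = n := by
      rw [hU', hcomap _ (hmap_le_K _)]
      have := hrank_drop U hvU hUker
      omega
    have hpair : ∀ S T : Submodule k V, v ∈ S → v ∈ T → S ≤ LinearMap.ker (B v) →
        T ≤ LinearMap.ker (B v) → (∀ x ∈ S, q x = 0) →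
        finrank k ↥(Submodule.comap K.subtype (Submodule.map p S) ⊓
          Submodule.comap K.subtype (Submodule.map p T)) + 1 = finrank k ↥(S ⊓ T) := by
      intro S T hvS hvT hSk hTk hSq
      rw [← Submodule.comap_inf, hmap_inf S T hvS hSk hTk, hcomap _ (hmap_le_K _)]
      exact hrank_drop (S ⊓ T) ⟨hvS, hvT⟩ (le_trans inf_le_left hSk)
    have h1 := hpair L W hvL hvW hLker hWker hLq
    have h2 := hpair W U hvW hvU hWker hUker hWq
    have h3 := hpair U L hvU hvL hUker hLker hUq
    rw [← hL', ← hW'] at h1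
    rw [← hW', ← hU'] at h2
    rw [← hU', ← hL'] at h3
    have hmod := IH q₀ hnd₀ hKdim L' W' U'
      hL'r (hiso' L hLker hLq) hW'r (hiso' W hWker hWq) hU'r (hiso' U hUker hUq)
    omega
  · -- v is not in U
    set Uv := U ⊓ LinearMap.ker (B v) with hUvdef
    have hUvker : Uv ≤ LinearMap.ker (B v) := inf_le_right
    have hvUv : v ∉ Uv := fun h => hvU h.1
    have hUvq : ∀ x ∈ Uv, q x = 0 := fun x hx => hUq x hx.1
    set L' := Submodule.comap K.subtype (Submodule.map p L) with hL'
    set W' := Submodule.comap K.subtype (Submodule.map p W) with hW'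
    set U' := Submodule.comap K.subtype (Submodule.map p Uv) with hU'
    have hL'r : finrank k ↥L' = n := by
      rw [hL', hcomap _ (hmap_le_K _)]
      have := hrank_drop L hvL hLker
      omega
    have hW'r : finrank k ↥W' = n := by
      rw [hW', hcomap _ (hmap_le_K _)]
      have := hrank_drop W hvW hWker
      omega
    have hU'q : ∀ z ∈ U', q₀ z = 0 := hiso' Uv hUvker hUvq
    have hU'Uv : finrank k ↥U' = finrank k ↥Uv := by
      rw [hU', hcomap _ (hmap_le_K _), hrank_eq Uv hvUv hUvker]
    have hU'r : finrank k ↥U' = n := by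
      have hup := isotropic_le (QuadraticMap.polarBilin q₀) hrefl₀ hnd₀ U'
        (polar_zero_of_iso q₀ U' hU'q)
      rw [hKdim] at hup
      -- lower bound for finrank Uv
      have h1 := Submodule.finrank_sup_add_finrank_inf_eq U (LinearMap.ker (B v))
      rw [← hUvdef] at h1
      have h2 := LinearMap.finrank_range_add_finrank_ker (B v)
      have h3 : finrank k ↥(LinearMap.range (B v)) ≤ 1 :=
        (Submodule.finrank_le _).trans (le_of_eq (finrank_self k))
      have h4 : finrank k ↥(U ⊔ LinearMap.ker (B v)) ≤ 2 * (n + 1) := by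
        rw [← hdim]; exact Submodule.finrank_le _
      rw [hdim] at h2
      omega
    have h1 : finrank k ↥(L' ⊓ W') + 1 = finrank k ↥(L ⊓ W) := by
      rw [hL', hW', ← Submodule.comap_inf, hmap_inf L W hvL hLker hWker,
        hcomap _ (hmap_le_K _)]
      exact hrank_drop (L ⊓ W) ⟨hvL, hvW⟩ hLWker
    have h2 : finrank k ↥(W' ⊓ U') = finrank k ↥(W ⊓ U) := by
      have hWUv : W ⊓ Uv = W ⊓ U := by
        rw [hUvdef, ← inf_assoc, inf_eq_left]
        exact le_trans inf_le_left hWker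
      rw [hW', hU', ← Submodule.comap_inf, hmap_inf W Uv hvW hWker hUvker, hWUv,
        hcomap _ (hmap_le_K _)]
      exact hrank_eq (W ⊓ U) (fun h => hvU h.2) (le_trans inf_le_left hWker)
    have h3 : finrank k ↥(U' ⊓ L') = finrank k ↥(U ⊓ L) := by
      have hLUv : L ⊓ Uv = L ⊓ U := by
        rw [hUvdef, ← inf_assoc, inf_eq_left]
        exact le_trans inf_le_left hLker
      rw [hU', hL', inf_comm, ← Submodule.comap_inf, hmap_inf L Uv hvL hLker hUvker, hLUv,
        hcomap _ (hmap_le_K _), inf_comm U L]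
      exact hrank_eq (L ⊓ U) (fun h => hvU h.2) (le_trans inf_le_left hLker)
    have hmod := IH q₀ hnd₀ hKdim L' W' U'
      hL'r (hiso' L hLker hLq) hW'r (hiso' W hWker hWq) hU'r hU'q
    omega

theorem main_induction : ∀ n : ℕ, MainStmt.{u, v} n := by
  intro n
  induction n with
  | zero =>
    intro k V _ _ _ _ q hnd hdim L W U hLr hLq hWr hWq hUr hUq
    have h1 : finrank k ↥(L ⊓ W) ≤ 0 := hLr ▸ Submodule.finrank_mono inf_le_left
    have h2 : finrank k ↥(W ⊓ U) ≤ 0 := hWr ▸ Submodule.finrank_mono inf_le_left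
    have h3 : finrank k ↥(U ⊓ L) ≤ 0 := hUr ▸ Submodule.finrank_mono inf_le_left
    omega
  | succ n ih =>
    intro k V _ _ _ _ q hnd hdim L W U hLr hLq hWr hWq hUr hUq
    by_cases hLW : L ⊓ W = ⊥
    · by_cases hWU : W ⊓ U = ⊥
      · by_cases hUL : U ⊓ L = ⊥
        · have heven := transverse_even (n + 1) q hnd hdim L W U hLr hLq hWr hWq hUr hUq
            hLW hWU hUL
          rw [hLW, hWU, hUL, finrank_bot]
          omega
        · obtain ⟨v, hv, hv0⟩ := (Submodule.ne_bot_iff _).mp hUL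
          have := reduce n ih q hnd hdim U L W hUr hUq hLr hLq hWr hWq v hv0 hv.1 hv.2
          omega
      · obtain ⟨v, hv, hv0⟩ := (Submodule.ne_bot_iff _).mp hWU
        have := reduce n ih q hnd hdim W U L hWr hWq hUr hUq hLr hLq v hv0 hv.1 hv.2
        omega
    · obtain ⟨v, hv, hv0⟩ := (Submodule.ne_bot_iff _).mp hLW
      exact reduce n ih q hnd hdim L W U hLr hLq hWr hWq hUr hUq v hv0 hv.1 hv.2

/-- Let `V` be a `2n`-dimensional vector space over a field `k` with a
hyperbolic quadratic form `q` (expressed in a basis indexed by `Fin n ⊕ Fin n` as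
`q = ∑ xᵢ x_{n+i}`).  For Lagrangian subspaces, the parity of `dim (L ⊓ W)` is the same
as the parity of `n` when `L, W` are in the same family; concretely, for any three
Lagrangian subspaces `L, W, U` one has
`dim(L∩W) + dim(W∩U) + dim(U∩L) ≡ n (mod 2)`. -/
theorem stmt0 {k V : Type*} [Field k] [AddCommGroup V] [Module k V]
    [FiniteDimensional k V] (n : ℕ) (q : QuadraticForm k V)
    (e : Basis (Fin n ⊕ Fin n) k V)
    (hq : ∀ v, q v = ∑ i : Fin n, e.repr v (Sum.inl i) * e.repr v (Sum.inr i))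
    (L W U : Submodule k V)
    (hL : finrank k L = n ∧ ∀ x ∈ L, q x = 0)
    (hW : finrank k W = n ∧ ∀ x ∈ W, q x = 0)
    (hU : finrank k U = n ∧ ∀ x ∈ U, q x = 0) :
    (finrank k ↥(L ⊓ W) + finrank k ↥(W ⊓ U) + finrank k ↥(U ⊓ L)) % 2 = n % 2 := by
  have hdim : finrank k V = 2 * n := by
    rw [finrank_eq_card_basis e]
    simp [Fintype.card_sum]
    ring
  have hpolar : ∀ x y, QuadraticMap.polarBilin q x y =
      ∑ i : Fin n, (e.repr x (Sum.inl i) * e.repr y (Sum.inr i) +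
        e.repr y (Sum.inl i) * e.repr x (Sum.inr i)) := by
    intro x y
    rw [QuadraticMap.polarBilin_apply_apply, QuadraticMap.polar, hq (x + y), hq x, hq y,
      ← Finset.sum_sub_distrib, ← Finset.sum_sub_distrib]
    refine Finset.sum_congr rfl fun i _ => ?_
    simp only [map_add, Finsupp.coe_add, Pi.add_apply]
    ring
  have hnd : LinearMap.BilinForm.Nondegenerate (QuadraticMap.polarBilin q) := by
    refine (LinearMap.IsRefl.nondegenerate_iff_separatingLeft (B := QuadraticMap.polarBilin q)
      (fun x y h => by rw [hpolar] at h ⊢; rw [← h]; exact Finset.sum_congr rfl fun i _ => by ring)).mpr ?_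
    intro x hx
    have hcoord : ∀ i : Fin n ⊕ Fin n, e.repr x i = 0 := by
      intro i
      cases i with
      | inl j =>
        have h := hx (e (Sum.inr j))
        rw [hpolar] at h
        simpa [Basis.repr_self, Finsupp.single_apply, Finset.sum_ite_eq'] using h
      | inr j =>
        have h := hx (e (Sum.inl j))
        rw [hpolar] at h
        simpa [Basis.repr_self, Finsupp.single_apply, Finset.sum_ite_eq'] using h
    have : e.repr x = 0 := Finsupp.ext hcoord
    simpa using (LinearEquiv.map_eq_zero_iff e.repr).mp this
  exact main_induction n q hnd hdim L W U hL.1 hL.2 hW.1 hW.2 hU.1 hU.2
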